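/- Let n ≥ 1, let K ⊂ ℝⁿ be a convex body and let ν ∈ (0, |K|]. Then there exists a constant C = C(ν, K) > 0 such that for every convex body P ⊆ K with |P| ≥ ν and every integer k ≥ 1, one has #(P ∩ ℤⁿ/k) ≥ (1 − C/k)·|P|·kⁿ. -/

import Mathlib

open MeasureTheory Set ENNReal Metric Topology RealInnerProductSpace

/-- The rescaled lattice `ℤⁿ/k` inside `ℝⁿ`. -/
def lpts (n k : ℕ) : Set (EuclideanSpace ℝ (Fin n)) :=
  {x | ∀ i, ∃ m : ℤ, (k : ℝ) * x i = (m : ℝ)}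

lemma coord_abs_le (n : ℕ) (x : EuclideanSpace ℝ (Fin n)) (i : Fin n) : |x i| ≤ ‖x‖ := by
  rw [EuclideanSpace.norm_eq]
  rw [← Real.sqrt_sq_eq_abs]
  apply Real.sqrt_le_sqrt
  have : |x i| ^ 2 ≤ ∑ j, ‖x j‖ ^ 2 := by
    have := Finset.single_le_sum (f := fun j => ‖x j‖ ^ 2) (fun j _ => by positivity)
      (Finset.mem_univ i)
    simpa [Real.norm_eq_abs, sq_abs] using this
  simpa [sq_abs] using this

lemma lpts_finite (n k : ℕ) (hk : 1 ≤ k) (P : Set (EuclideanSpace ℝ (Fin n)))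
    (hP : Bornology.IsBounded P) : (P ∩ lpts n k).Finite := by
  obtain ⟨R, hR⟩ := hP.subset_closedBall 0
  have hkpos : (0:ℝ) < k := by exact_mod_cast hk
  set g : EuclideanSpace ℝ (Fin n) → (Fin n → ℤ) := fun x i => ⌊(k:ℝ) * x i⌋ with hg
  have hginj : Set.InjOn g (P ∩ lpts n k) := by
    intro x hx y hy hxy
    have hx' := hx.2; have hy' := hy.2
    ext i
    obtain ⟨mx, hmx⟩ := hx' i
    obtain ⟨my, hmy⟩ := hy' i
    have h1 : g x i = mx := by simp [hg, hmx]
    have h2 : g y i = my := by simp [hg, hmy]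
    have : mx = my := by rw [← h1, ← h2, hxy]
    have : (k:ℝ) * x i = (k:ℝ) * y i := by rw [hmx, hmy, this]
    exact mul_left_cancel₀ (ne_of_gt hkpos) this
  have himg : g '' (P ∩ lpts n k) ⊆ Set.pi Set.univ (fun _ : Fin n => Set.Icc (-(⌈(k:ℝ)*R⌉+1)) (⌈(k:ℝ)*R⌉+1)) := by
    rintro - ⟨x, hx, rfl⟩ i -
    have hxR : ‖x‖ ≤ R := by
      have := hR hx.1; simpa [Metric.mem_closedBall] using this
    have hco : |x i| ≤ R := (coord_abs_le n x i).trans hxR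
    have h1 : (k:ℝ) * x i ≤ (k:ℝ) * R := by
      apply mul_le_mul_of_nonneg_left _ hkpos.le
      exact (abs_le.mp hco).2
    have h2 : -((k:ℝ) * R) ≤ (k:ℝ) * x i := by
      rw [neg_le]
      calc -((k:ℝ)*x i) = (k:ℝ) * (-x i) := by ring
      _ ≤ (k:ℝ) * R := mul_le_mul_of_nonneg_left (by linarith [(abs_le.mp hco).1]) hkpos.le
    constructor
    · have : (-(⌈(k:ℝ)*R⌉+1) : ℝ) ≤ (k:ℝ) * x i := by
        push_cast; linarith [Int.le_ceil ((k:ℝ)*R)]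
      exact_mod_cast (Int.le_floor.mpr (by exact_mod_cast this))
    · have : (⌊(k:ℝ)*x i⌋ : ℝ) ≤ ⌈(k:ℝ)*R⌉+1 := by
        push_cast
        linarith [Int.floor_le ((k:ℝ)*x i), Int.le_ceil ((k:ℝ)*R)]
      exact_mod_cast this
  have hfin : (Set.pi Set.univ (fun _ : Fin n => Set.Icc (-(⌈(k:ℝ)*R⌉+1)) (⌈(k:ℝ)*R⌉+1))).Finite :=
    Set.Finite.pi (fun _ => Set.finite_Icc _ _)
  exact Set.Finite.of_finite_image (hfin.subset himg) hginj

lemma cube_volume (n k : ℕ) (hk : 1 ≤ k) (y : EuclideanSpace ℝ (Fin n)) :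
    volume {z : EuclideanSpace ℝ (Fin n) | ∀ i, y i ≤ z i ∧ z i < y i + 1/k}
      = ENNReal.ofReal ((1:ℝ)/k) ^ n := by
  have hEq : {z : EuclideanSpace ℝ (Fin n) | ∀ i, y i ≤ z i ∧ z i < y i + 1/k}
      = ((MeasurableEquiv.toLp 2 (Fin n → ℝ)).symm) ⁻¹'
        (Set.pi Set.univ fun i => Set.Ico (y i) (y i + 1/k)) := by
    ext z
    simp [Set.mem_pi, Set.mem_Ico]
  rw [hEq, (EuclideanSpace.volume_preserving_symm_measurableEquiv_toLp (Fin n)).measure_preimage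
    (MeasurableSet.univ_pi (fun i => measurableSet_Ico)).nullMeasurableSet]
  rw [volume_pi_pi]
  simp [Real.volume_Ico]

noncomputable def latfl (n k : ℕ) (x : EuclideanSpace ℝ (Fin n)) : EuclideanSpace ℝ (Fin n) :=
  WithLp.toLp 2 (fun i => (⌊(k:ℝ) * x i⌋ : ℝ) / k)

lemma latfl_mem (n k : ℕ) (hk : 1 ≤ k) (x : EuclideanSpace ℝ (Fin n)) :
    latfl n k x ∈ lpts n k := by
  intro i
  refine ⟨⌊(k:ℝ) * x i⌋, ?_⟩
  have hkne : ((k:ℝ)) ≠ 0 := by positivity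
  simp only [latfl, WithLp.ofLp_toLp]
  field_simp

lemma latfl_dist (n k : ℕ) (hk : 1 ≤ k) (x : EuclideanSpace ℝ (Fin n)) :
    dist (latfl n k x) x ≤ Real.sqrt n / k := by
  have hkpos : (0:ℝ) < k := by exact_mod_cast hk
  rw [EuclideanSpace.dist_eq]
  have hcoord : ∀ i, dist (latfl n k x i) (x i) ^ 2 ≤ (1/(k:ℝ))^2 := by
    intro i
    have h1 : (⌊(k:ℝ) * x i⌋ : ℝ) ≤ (k:ℝ) * x i := Int.floor_le _
    have h2 : (k:ℝ) * x i < ⌊(k:ℝ) * x i⌋ + 1 := Int.lt_floor_add_one _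
    have hd : latfl n k x i - x i = ((⌊(k:ℝ)*x i⌋ : ℝ) - (k:ℝ)*x i)/k := by
      simp only [latfl, WithLp.ofLp_toLp]
      field_simp
    have habs : |latfl n k x i - x i| ≤ 1/(k:ℝ) := by
      rw [hd, abs_div, abs_of_pos hkpos]
      have : |(⌊(k:ℝ)*x i⌋ : ℝ) - (k:ℝ)*x i| ≤ 1 := abs_le.mpr ⟨by linarith, by linarith⟩
      rw [div_le_div_iff₀ hkpos hkpos]
      calc |(⌊(k:ℝ)*x i⌋ : ℝ) - (k:ℝ)*x i| * k ≤ 1 * k := by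
            exact mul_le_mul_of_nonneg_right this hkpos.le
        _ = 1 * k := rfl
    have : dist (latfl n k x i) (x i) = |latfl n k x i - x i| := Real.dist_eq _ _
    rw [this]
    have h0 : (0:ℝ) ≤ 1/(k:ℝ) := by positivity
    nlinarith [abs_nonneg (latfl n k x i - x i)]
  have hsum : ∑ i, dist (latfl n k x i) (x i) ^ 2 ≤ (n:ℝ) * (1/k)^2 := by
    calc ∑ i, dist (latfl n k x i) (x i) ^ 2 ≤ ∑ _i : Fin n, (1/(k:ℝ))^2 :=
          Finset.sum_le_sum (fun i _ => hcoord i)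
      _ = (n:ℝ) * (1/k)^2 := by simp [Finset.sum_const, mul_comm]
  calc Real.sqrt (∑ i, dist (latfl n k x i) (x i) ^ 2) ≤ Real.sqrt ((n:ℝ) * (1/k)^2) :=
        Real.sqrt_le_sqrt hsum
    _ = Real.sqrt n / k := by
        rw [Real.sqrt_mul (by positivity), Real.sqrt_sq (by positivity)]; ring




lemma count_key (n k : ℕ) (hn : 1 ≤ n) (hk : 1 ≤ k) (P : Set (EuclideanSpace ℝ (Fin n)))
    (hPc : IsCompact P) (hPcv : Convex ℝ P)
    (c : EuclideanSpace ℝ (Fin n)) (r : ℝ) (hr : 0 < r) (hball : Metric.closedBall c r ⊆ P)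
    (lam : ℝ) (hlam : lam = Real.sqrt n / (r * k)) (hlam1 : lam ≤ 1) :
    (1 - lam)^n * (volume P).toReal ≤ ((P ∩ lpts n k).ncard : ℝ) * (1/(k:ℝ))^n := by
  have hkpos : (0:ℝ) < k := by exact_mod_cast hk
  have hnpos : (0:ℝ) < n := by exact_mod_cast hn
  have hsq : 0 < Real.sqrt n := Real.sqrt_pos.mpr hnpos
  have hlam0 : 0 < lam := by rw [hlam]; positivity
  have hlamr : lam * r = Real.sqrt n / k := by
    rw [hlam]; field_simp
  set Q := AffineMap.homothety c (1 - lam) '' P with hQ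
  -- every point of Q has a closed ball inside P
  have hQball : ∀ x ∈ Q, Metric.closedBall x (lam * r) ⊆ P := by
    rintro x ⟨p, hp, rfl⟩ y hy
    have hx : AffineMap.homothety c (1 - lam) p = (1 - lam) • (p - c) + c := by
      simp [AffineMap.homothety_apply, vsub_eq_sub, vadd_eq_add]
    set x := AffineMap.homothety c (1 - lam) p
    have hyx : ‖y - x‖ ≤ lam * r := by
      rw [Metric.mem_closedBall, dist_eq_norm] at hy; exact hy
    set q := c + lam⁻¹ • (y - x) with hq
    have hqP : q ∈ P := by
      apply hball
      rw [Metric.mem_closedBall, dist_eq_norm]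
      have : q - c = lam⁻¹ • (y - x) := by rw [hq]; abel
      rw [this, norm_smul, norm_inv, Real.norm_eq_abs, abs_of_pos hlam0]
      rw [inv_mul_le_iff₀ hlam0]
      linarith [hyx]
    have hcomb := hPcv hp hqP (by linarith : (0:ℝ) ≤ 1 - lam) hlam0.le (by ring)
    have hy' : (1 - lam) • p + lam • q = y := by
      rw [hq, smul_add, smul_smul, mul_inv_cancel₀ (ne_of_gt hlam0), one_smul, hx]
      module
    rwa [hy'] at hcomb
  -- covering by cubes
  have hSfin : (P ∩ lpts n k).Finite := lpts_finite n k hk P hPc.isBounded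
  have hcover : Q ⊆ ⋃ y ∈ hSfin.toFinset,
      {z : EuclideanSpace ℝ (Fin n) | ∀ i, y i ≤ z i ∧ z i < y i + 1/k} := by
    intro x hx
    have hfl : latfl n k x ∈ P ∩ lpts n k := by
      constructor
      · apply hQball x hx
        rw [Metric.mem_closedBall, hlamr]
        exact latfl_dist n k hk x
      · exact latfl_mem n k hk x
    apply Set.mem_biUnion (hSfin.mem_toFinset.mpr hfl)
    intro i
    constructor
    · show (⌊(k:ℝ) * x i⌋ : ℝ) / k ≤ x i
      rw [div_le_iff₀ hkpos, mul_comm]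
      exact Int.floor_le _
    · show x i < (⌊(k:ℝ) * x i⌋ : ℝ) / k + 1/k
      rw [← add_div, lt_div_iff₀ hkpos, mul_comm]
      exact Int.lt_floor_add_one _
  -- volume estimates
  have hvolQ : volume Q = ENNReal.ofReal ((1 - lam)^n) * volume P := by
    rw [hQ, Measure.addHaar_image_homothety]
    congr 2
    rw [finrank_euclideanSpace_fin, abs_of_nonneg (pow_nonneg (by linarith) n)]
  have hle : volume Q ≤ (hSfin.toFinset.card : ℝ≥0∞) * ENNReal.ofReal ((1:ℝ)/k) ^ n := by
    calc volume Q ≤ volume (⋃ y ∈ hSfin.toFinset,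
          {z : EuclideanSpace ℝ (Fin n) | ∀ i, y i ≤ z i ∧ z i < y i + 1/k}) :=
          measure_mono hcover
      _ ≤ ∑ y ∈ hSfin.toFinset,
          volume {z : EuclideanSpace ℝ (Fin n) | ∀ i, y i ≤ z i ∧ z i < y i + 1/k} :=
          measure_biUnion_finset_le _ _
      _ = ∑ y ∈ hSfin.toFinset, ENNReal.ofReal ((1:ℝ)/k) ^ n := by
          apply Finset.sum_congr rfl; intro y _; exact cube_volume n k hk y
      _ = (hSfin.toFinset.card : ℝ≥0∞) * ENNReal.ofReal ((1:ℝ)/k) ^ n := by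
          rw [Finset.sum_const, nsmul_eq_mul]
  rw [hvolQ] at hle
  have hcard : (P ∩ lpts n k).ncard = hSfin.toFinset.card := Set.ncard_eq_toFinset_card _ hSfin
  have hfin2 : ((hSfin.toFinset.card : ℝ≥0∞) * ENNReal.ofReal ((1:ℝ)/k) ^ n) ≠ ⊤ :=
    ENNReal.mul_ne_top (ENNReal.natCast_ne_top _) (ENNReal.pow_ne_top ENNReal.ofReal_ne_top)
  have h := ENNReal.toReal_mono hfin2 hle
  rw [ENNReal.toReal_mul, ENNReal.toReal_ofReal (pow_nonneg (by linarith) n),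
    ENNReal.toReal_mul, ENNReal.toReal_natCast, ENNReal.toReal_pow,
    ENNReal.toReal_ofReal (by positivity)] at h
  rw [hcard]
  exact h

abbrev Eu (n : ℕ) := EuclideanSpace ℝ (Fin n)

set_option maxHeartbeats 1000000 in
lemma uniform_ball (n : ℕ) (hn : 1 ≤ n) (K : Set (Eu n))
    (hKcp : IsCompact K) (ν : ℝ) (hν : 0 < ν) :
    ∃ r : ℝ, 0 < r ∧ ∀ P : Set (Eu n),
      P ⊆ K → P.Nonempty → IsCompact P → Convex ℝ P → ν ≤ (volume P).toReal →
      ∃ c, Metric.closedBall c r ⊆ P := by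
  by_contra hcon
  push_neg at hcon
  have hsel : ∀ m : ℕ, ∃ P : Set (Eu n), P ⊆ K ∧ P.Nonempty ∧ IsCompact P ∧ Convex ℝ P ∧
      ν ≤ (volume P).toReal ∧ ∀ c, ¬ Metric.closedBall c (1/(m+1) : ℝ) ⊆ P := by
    intro m
    obtain ⟨P, h1, h2, h3, h4, h5, h6⟩ := hcon (1/(m+1) : ℝ) (by positivity)
    exact ⟨P, h1, h2, h3, h4, h5, fun c hc => h6 c hc⟩
  choose Pm hPK hPne hPcp hPcv hPvol hPbad using hsel
  haveI : CompactSpace K := isCompact_iff_compactSpace.mp hKcp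
  set A : ℕ → TopologicalSpace.NonemptyCompacts K := fun m =>
    ⟨⟨Subtype.val ⁻¹' Pm m, ((hPcp m).isClosed.preimage continuous_subtype_val).isCompact⟩,
      by obtain ⟨x, hx⟩ := hPne m; exact ⟨⟨x, hPK m hx⟩, hx⟩⟩ with hA
  obtain ⟨L, -, φ, hφ, hφtend⟩ := isCompact_univ.tendsto_subseq (x := A) (fun m => mem_univ _)
  set Pinf : Set (Eu n) := Subtype.val '' (L : Set K) with hPinf
  have hPinfcp : IsCompact Pinf := L.isCompact.image continuous_subtype_val
  have hPinfne : Pinf.Nonempty := L.nonempty.image _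
  have hPinfK : Pinf ⊆ K := by rintro - ⟨x, -, rfl⟩; exact x.2
  have himg : ∀ m, Subtype.val '' ((A m : Set K)) = Pm m := by
    intro m
    rw [hA]
    show Subtype.val '' (Subtype.val ⁻¹' Pm m) = Pm m
    rw [Set.image_preimage_eq_inter_range, Subtype.range_coe]
    exact Set.inter_eq_self_of_subset_left (hPK m)
  have hdist_eq : ∀ j, hausdorffDist (Pm (φ j)) Pinf = dist (A (φ j)) L := by
    intro j
    have h2 : dist (A (φ j)) L
        = hausdorffDist ((A (φ j) : Set K)) ((L : Set K)) := rfl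
    rw [h2, ← himg (φ j), hPinf]
    exact Metric.hausdorffDist_image (s := ((A (φ j) : Set K))) (t := ((L : Set K)))
      (isometry_subtype_coe)
  have hHD : Filter.Tendsto (fun j => hausdorffDist (Pm (φ j)) Pinf) Filter.atTop (𝓝 0) := by
    have h1 : Filter.Tendsto (fun j => dist (A (φ j)) L) Filter.atTop (𝓝 0) :=
      tendsto_iff_dist_tendsto_zero.mp hφtend
    simpa only [hdist_eq] using h1
  have hetop : ∀ j, EMetric.hausdorffEdist (Pm (φ j)) Pinf ≠ ⊤ := fun j =>
    Metric.hausdorffEdist_ne_top_of_nonempty_of_bounded (hPne _) hPinfne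
      (hPcp _).isBounded hPinfcp.isBounded
  -- Pinf is convex
  have hPinfcv : Convex ℝ Pinf := by
    intro x hx y hy a b ha hb hab
    have key : ∀ ε : ℝ, 0 < ε → infDist (a • x + b • y) Pinf ≤ 2 * ε := by
      intro ε hε
      obtain ⟨j, hj⟩ := (hHD.eventually (gt_mem_nhds hε)).exists
      obtain ⟨x', hx', hxx'⟩ := Metric.exists_dist_lt_of_hausdorffDist_lt hx
        (by rwa [Metric.hausdorffDist_comm] at hj)
        (by rw [EMetric.hausdorffEdist_comm]; exact hetop j)
      obtain ⟨y', hy', hyy'⟩ := Metric.exists_dist_lt_of_hausdorffDist_lt hy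
        (by rwa [Metric.hausdorffDist_comm] at hj)
        (by rw [EMetric.hausdorffEdist_comm]; exact hetop j)
      have hz' : a • x' + b • y' ∈ Pm (φ j) := hPcv (φ j) hx' hy' ha hb hab
      have hdz : dist (a • x + b • y) (a • x' + b • y') ≤ ε := by
        rw [dist_eq_norm]
        have : (a • x + b • y) - (a • x' + b • y') = a • (x - x') + b • (y - y') := by module
        rw [this]
        calc ‖a • (x - x') + b • (y - y')‖ ≤ ‖a • (x - x')‖ + ‖b • (y - y')‖ :=
              norm_add_le _ _
          _ = a * ‖x - x'‖ + b * ‖y - y'‖ := by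
              rw [norm_smul, norm_smul, Real.norm_eq_abs, Real.norm_eq_abs,
                abs_of_nonneg ha, abs_of_nonneg hb]
          _ ≤ a * ε + b * ε := by
              have h1 : ‖x - x'‖ ≤ ε := by rw [← dist_eq_norm]; exact hxx'.le
              have h2 : ‖y - y'‖ ≤ ε := by rw [← dist_eq_norm]; exact hyy'.le
              gcongr
          _ = ε := by rw [← add_mul, hab, one_mul]
      calc infDist (a • x + b • y) Pinf
          ≤ infDist (a • x + b • y) (Pm (φ j)) + hausdorffDist (Pm (φ j)) Pinf :=
            Metric.infDist_le_infDist_add_hausdorffDist (hetop j)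
        _ ≤ dist (a • x + b • y) (a • x' + b • y') + hausdorffDist (Pm (φ j)) Pinf := by
            gcongr; exact Metric.infDist_le_dist_of_mem hz'
        _ ≤ ε + ε := add_le_add hdz hj.le
        _ = 2 * ε := by ring
    have h0 : infDist (a • x + b • y) Pinf ≤ 0 := by
      by_contra hpos
      push_neg at hpos
      have := key (infDist (a • x + b • y) Pinf / 4) (by linarith)
      linarith
    have := Metric.infDist_nonneg (x := a • x + b • y) (s := Pinf)
    have hz : infDist (a • x + b • y) Pinf = 0 := le_antisymm h0 this
    have := (Metric.mem_closure_iff_infDist_zero hPinfne).mpr hz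
    rwa [hPinfcp.isClosed.closure_eq] at this
  -- volume of Pinf is at least ν
  have hvol : ENNReal.ofReal ν ≤ volume Pinf := by
    have htend : Filter.Tendsto (fun δ => volume (cthickening δ Pinf)) (𝓝[>] 0)
        (𝓝 (volume Pinf)) := by
      refine (tendsto_measure_cthickening_of_isClosed ⟨1, one_pos, ?_⟩
        hPinfcp.isClosed).mono_left nhdsWithin_le_nhds
      exact (hPinfcp.cthickening).measure_lt_top.ne
    refine ge_of_tendsto htend ?_
    filter_upwards [self_mem_nhdsWithin] with δ hδ
    rw [Set.mem_Ioi] at hδ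
    obtain ⟨j, hj⟩ := (hHD.eventually (gt_mem_nhds hδ)).exists
    have hsub : Pm (φ j) ⊆ cthickening δ Pinf := by
      intro z hz
      obtain ⟨a, haP, hza⟩ := Metric.exists_dist_lt_of_hausdorffDist_lt hz hj (hetop j)
      exact Metric.mem_cthickening_of_dist_le z a δ Pinf haP hza.le
    calc ENNReal.ofReal ν ≤ volume (Pm (φ j)) :=
          ENNReal.ofReal_le_of_le_toReal (hPvol _)
      _ ≤ volume (cthickening δ Pinf) := measure_mono hsub
  have hposvol : 0 < volume Pinf := lt_of_lt_of_le (ENNReal.ofReal_pos.mpr hν) hvol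
  -- Pinf has nonempty interior
  have hint : (interior Pinf).Nonempty := by
    by_contra hempty
    rw [Set.not_nonempty_iff_eq_empty] at hempty
    have hspan : affineSpan ℝ Pinf ≠ ⊤ := by
      intro htop
      have h2 := hPinfcv.interior_nonempty_iff_affineSpan_eq_top.mpr htop
      rw [hempty] at h2
      exact Set.not_nonempty_empty h2
    have hzero : volume Pinf = 0 := by
      refine le_antisymm ?_ zero_le
      refine le_trans (measure_mono (subset_affineSpan ℝ Pinf)) ?_
      exact le_of_eq (Measure.addHaar_affineSubspace volume _ hspan)
    rw [hzero] at hposvol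
    exact lt_irrefl _ hposvol
  obtain ⟨c, hc⟩ := hint
  obtain ⟨ε, hε, hballc⟩ := Metric.isOpen_iff.mp isOpen_interior c hc
  set s : ℝ := ε/4 with hs
  have hs0 : 0 < s := by positivity
  have hball2 : Metric.closedBall c (2*s) ⊆ Pinf := by
    intro z hz
    refine interior_subset (hballc ?_)
    rw [Metric.mem_ball]
    rw [Metric.mem_closedBall] at hz
    calc dist z c ≤ 2*s := hz
      _ < ε := by rw [hs]; linarith
  -- pick a good index j
  have hev1 : ∀ᶠ j in Filter.atTop, hausdorffDist (Pm (φ j)) Pinf < s/2 :=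
    hHD.eventually (gt_mem_nhds (by positivity))
  have hev2 : ∀ᶠ j in Filter.atTop, (1/((φ j : ℝ)+1)) ≤ s := by
    obtain ⟨N, hN⟩ := exists_nat_gt (1/s)
    rw [Filter.eventually_atTop]
    refine ⟨N, fun j hj => ?_⟩
    have h1 : (N : ℝ) ≤ φ j := by
      have := le_trans hj (hφ.le_apply)
      exact_mod_cast this
    have h2 : 1/s < (φ j : ℝ) + 1 := by linarith
    rw [div_le_iff₀ (by positivity)]
    rw [div_lt_iff₀ hs0] at hN
    nlinarith
  obtain ⟨j, hj1, hj2⟩ := (hev1.and hev2).exists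
  refine hPbad (φ j) c ?_
  intro y hy
  have hys : dist y c ≤ s := le_trans hy hj2
  by_contra hyP
  -- separating hyperplane
  obtain ⟨f, u, hfa, hfy⟩ := geometric_hahn_banach_closed_point (hPcv (φ j))
    (hPcp (φ j)).isClosed hyP
  set w := (InnerProductSpace.toDual ℝ (Eu n)).symm f with hw
  have hwppty : ∀ v : Eu n, ⟪w, v⟫ = f v := fun v => InnerProductSpace.toDual_symm_apply
  obtain ⟨a₀, ha₀⟩ := hPne (φ j)
  have hwne : w ≠ 0 := by
    intro h0
    have h1 := hwppty a₀
    have h2 := hwppty y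
    rw [h0, inner_zero_left] at h1 h2
    have h3 := hfa a₀ ha₀
    rw [← h1] at h3
    rw [← h2] at hfy
    linarith
  have hwn : 0 < ‖w‖ := norm_pos_iff.mpr hwne
  set z := c + (2*s/‖w‖) • w with hz
  have hzc : z ∈ Metric.closedBall c (2*s) := by
    rw [Metric.mem_closedBall, dist_eq_norm]
    have h1 : z - c = (2*s/‖w‖) • w := by rw [hz]; abel
    rw [h1, norm_smul, Real.norm_eq_abs, abs_of_pos (by positivity)]
    rw [div_mul_cancel₀ _ (ne_of_gt hwn)]
  have hzP : z ∈ Pinf := hball2 hzc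
  obtain ⟨a, haP, hza⟩ := Metric.exists_dist_lt_of_hausdorffDist_lt hzP
    (show hausdorffDist Pinf (Pm (φ j)) < s/2 by rwa [Metric.hausdorffDist_comm])
    (by rw [EMetric.hausdorffEdist_comm]; exact hetop j)
  have h1 : ⟪w, z⟫ = ⟪w, c⟫ + 2*s*‖w‖ := by
    rw [hz, inner_add_right, real_inner_smul_right, real_inner_self_eq_norm_sq]
    field_simp
  have h2 : ⟪w, z⟫ - ⟪w, a⟫ ≤ ‖w‖ * (s/2) := by
    rw [← inner_sub_right]
    calc ⟪w, z - a⟫ ≤ ‖w‖ * ‖z - a‖ := real_inner_le_norm _ _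
      _ ≤ ‖w‖ * (s/2) := by
          gcongr
          rw [← dist_eq_norm]
          exact hza.le
  have h3 : ⟪w, a⟫ < u := by rw [hwppty]; exact hfa a haP
  have h4 : u < ⟪w, y⟫ := by rw [hwppty]; exact hfy
  have h5 : ⟪w, y⟫ ≤ ⟪w, c⟫ + ‖w‖ * s := by
    have hd : ⟪w, y⟫ - ⟪w, c⟫ = ⟪w, y - c⟫ := (inner_sub_right _ _ _).symm
    have hcs : ⟪w, y - c⟫ ≤ ‖w‖ * ‖y - c‖ := real_inner_le_norm _ _
    have hyc : ‖y - c‖ ≤ s := by rw [← dist_eq_norm]; exact hys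
    nlinarith
  nlinarith

theorem stmt3 (n : ℕ) (hn : 1 ≤ n) (K : Set (EuclideanSpace ℝ (Fin n)))
    (hKne : K.Nonempty) (hKcp : IsCompact K) (hKcv : Convex ℝ K)
    (ν : ℝ) (hν : 0 < ν) (hνK : ν ≤ (volume K).toReal) :
    ∃ C : ℝ, 0 < C ∧ ∀ P : Set (EuclideanSpace ℝ (Fin n)),
      P ⊆ K → P.Nonempty → IsCompact P → Convex ℝ P → ν ≤ (volume P).toReal →
      ∀ k : ℕ, 1 ≤ k →
        (1 - C / (k : ℝ)) * (volume P).toReal * (k : ℝ) ^ n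
          ≤ ((P ∩ lpts n k).ncard : ℝ) := by
  obtain ⟨r, hr, hball⟩ := uniform_ball n hn K hKcp ν hν
  have hnpos : (0:ℝ) < n := by exact_mod_cast hn
  have hsq : 0 < Real.sqrt n := Real.sqrt_pos.mpr hnpos
  refine ⟨(n : ℝ) * Real.sqrt n / r, by positivity, ?_⟩
  intro P hPK hPne hPc hPcv hPvol k hk
  have hkpos : (0:ℝ) < k := by exact_mod_cast hk
  obtain ⟨c, hc⟩ := hball P hPK hPne hPc hPcv hPvol
  set lam : ℝ := Real.sqrt n / (r * k) with hlam
  have hlam0 : 0 < lam := by rw [hlam]; positivity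
  have hCk : (n : ℝ) * Real.sqrt n / r / k = n * lam := by
    rw [hlam]; field_simp
  have hvol0 : 0 ≤ (volume P).toReal := ENNReal.toReal_nonneg
  by_cases hcase : 1 ≤ (n : ℝ) * lam
  · -- trivial case : the left side is nonpositive
    have h1 : (1 - (n : ℝ) * Real.sqrt n / r / k) ≤ 0 := by rw [hCk]; linarith
    have h2 : (1 - (n : ℝ) * Real.sqrt n / r / k) * (volume P).toReal * (k:ℝ)^n ≤ 0 := by
      apply mul_nonpos_of_nonpos_of_nonneg _ (by positivity)
      exact mul_nonpos_of_nonpos_of_nonneg h1 hvol0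
    exact h2.trans (by positivity)
  · push_neg at hcase
    have hlam1 : lam ≤ 1 := by
      have : lam ≤ (n:ℝ) * lam := le_mul_of_one_le_left hlam0.le (by exact_mod_cast hn)
      linarith
    have hkey := count_key n k hn hk P hPc hPcv c r hr hc lam hlam hlam1
    have hbern : 1 - (n:ℝ) * lam ≤ (1 - lam)^n := by
      have := one_add_mul_le_pow (a := -lam) (by linarith) n
      calc 1 - (n:ℝ) * lam = 1 + n * (-lam) := by ring
        _ ≤ (1 + (-lam))^n := this
        _ = (1 - lam)^n := by ring_nf
    calc (1 - (n : ℝ) * Real.sqrt n / r / k) * (volume P).toReal * (k : ℝ) ^ n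
        = (1 - (n:ℝ) * lam) * (volume P).toReal * (k : ℝ) ^ n := by rw [hCk]
      _ ≤ (1 - lam)^n * (volume P).toReal * (k : ℝ) ^ n := by
          have : 0 ≤ (k:ℝ)^n := by positivity
          apply mul_le_mul_of_nonneg_right _ this
          exact mul_le_mul_of_nonneg_right hbern hvol0
      _ ≤ (((P ∩ lpts n k).ncard : ℝ) * (1/(k:ℝ))^n) * (k : ℝ) ^ n :=
          mul_le_mul_of_nonneg_right hkey (by positivity)
      _ = ((P ∩ lpts n k).ncard : ℝ) := by
          rw [mul_assoc, ← mul_pow]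
          field_simp
          rw [one_pow, mul_one]
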